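/- Let P be an LPOD and M a model of P. Define the interpretation M' by M'(A) = T if M(A) = T*, and M'(A) = M(A) otherwise. Then M' is a model of P. -/
import Mathlib


/-- The four truth values F < F* < T* < T. -/
inductive V where
  | F | Fs | Ts | T
  deriving DecidableEq, Repr

def V.toNat : V → ℕ
  | .F => 0
  | .Fs => 1
  | .Ts => 2
  | .T => 3

instance : LinearOrder V :=
  LinearOrder.lift' V.toNat (by intro a b; cases a <;> cases b <;> simp [V.toNat])

/-- An LPOD rule `hd × hds(1) × ⋯ × hds(k) ← pos(1) ∧ ⋯ ∧ not neg(1) ∧ ⋯`. -/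
structure Rule where
  hd : ℕ
  hds : List ℕ
  pos : List ℕ
  neg : List ℕ
  deriving DecidableEq, Repr

/-- Value of an ordered disjunction `c × cs(1) × ⋯ × cs(k)` of atoms. -/
def evalHead (I : ℕ → V) : ℕ → List ℕ → V
  | c, [] => I c
  | c, c' :: cs => if I c = V.Fs then evalHead I c' cs else I c

/-- Value of `not φ` given the value of `φ`. -/
def evalNot (v : V) : V := if v ≤ V.Fs then V.T else V.F

/-- Value of the body of a rule (the empty body evaluates to `T`). -/
def evalBody (I : ℕ → V) (r : Rule) : V :=
  ((r.pos.map I) ++ (r.neg.map (fun b => evalNot (I b)))).foldr min V.T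

/-- A rule evaluates to `T` under `I` (i.e. `I(head) ≥ I(body)`). -/
def Rule.sat (I : ℕ → V) (r : Rule) : Prop :=
  evalBody I r ≤ evalHead I r.hd r.hds

/-- An LPOD: a finite set of rules. -/
abbrev Program := Finset Rule

def isModel (I : ℕ → V) (P : Program) : Prop := ∀ r ∈ P, r.sat I

/-- Logical equivalence in the four-valued logic: same models. -/
def logEquiv (P1 P2 : Program) : Prop := ∀ I : ℕ → V, isModel I P1 ↔ isModel I P2

def Rule.atoms (r : Rule) : Finset ℕ :=
  {r.hd} ∪ r.hds.toFinset ∪ r.pos.toFinset ∪ r.neg.toFinset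

/-- The atoms occurring in a program. -/
def progAtoms (P : Program) : Finset ℕ := P.biUnion Rule.atoms

/-- The ordering `⪯` on truth values: reflexive closure of
    `F ≺ F*`, `F ≺ T*`, `F ≺ T`, `T* ≺ T`. -/
def V.pre (v1 v2 : V) : Prop :=
  v1 = v2 ∨ (v1 = V.F ∧ v2 ≠ V.F) ∨ (v1 = V.Ts ∧ v2 = V.T)

/-- `I1 ⪯ I2` relative to the atoms of `P`. -/
def interpLe (P : Program) (I1 I2 : ℕ → V) : Prop :=
  ∀ A ∈ progAtoms P, V.pre (I1 A) (I2 A)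

/-- `I` is solid for `P`: no atom of `P` gets the value `T*`. -/
def solid (P : Program) (I : ℕ → V) : Prop :=
  ∀ A ∈ progAtoms P, I A ≠ V.Ts

/-- An answer set of `P`: a `⪯`-minimal model of `P` that is solid. -/
def answerSet (P : Program) (M : ℕ → V) : Prop :=
  isModel M P ∧ solid P M ∧
    ∀ N : ℕ → V, isModel N P → interpLe P N M → interpLe P M N

/-- The atoms of `P` receiving the value `F*` under `M`. -/
def fstars (P : Program) (M : ℕ → V) : Finset ℕ :=
  (progAtoms P).filter (fun A => M A = V.Fs)

/-- A most-preferred answer set: `⊏`-minimal among the answer sets. -/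
def mostPreferred (P : Program) (M : ℕ → V) : Prop :=
  answerSet P M ∧ ∀ N : ℕ → V, answerSet P N → ¬ fstars P N ⊂ fstars P M

/-- Strong equivalence under the most-preferred answer sets. -/
def seMost (P1 P2 : Program) : Prop :=
  ∀ P : Program, ∀ M : ℕ → V, mostPreferred (P1 ∪ P) M ↔ mostPreferred (P2 ∪ P) M

/-- Strong equivalence under all the answer sets. -/
def seAll (P1 P2 : Program) : Prop :=
  ∀ P : Program, ∀ M : ℕ → V, answerSet (P1 ∪ P) M ↔ answerSet (P2 ∪ P) M

/-- A normal logic program: every rule has a single atom as head. -/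
def normalProg (P : Program) : Prop := ∀ r ∈ P, r.hds = []

/-- `X` is closed under the rules of the Gelfond–Lifschitz reduct `P^S`. -/
def reductClosed (P : Program) (S X : Set ℕ) : Prop :=
  ∀ r ∈ P, (∀ b ∈ r.neg, b ∉ S) → (∀ a ∈ r.pos, a ∈ X) → r.hd ∈ X

/-- `S` is a stable model (standard answer set): the least Herbrand model of `P^S`. -/
def stableModel (P : Program) (S : Set ℕ) : Prop :=
  reductClosed P S S ∧ ∀ X : Set ℕ, reductClosed P S X → S ⊆ X

/-- `I` is three-valued for `P`: no atom of `P` gets the value `F*`. -/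
def threeValued (P : Program) (I : ℕ → V) : Prop :=
  ∀ A ∈ progAtoms P, I A ≠ V.Fs


def collapse (v : V) : V := if v = V.Ts then V.T else v

lemma collapse_mono {a b : V} (h : a ≤ b) : collapse a ≤ collapse b := by
  cases a <;> cases b <;> first | exact h | decide | (exfalso; exact absurd h (by decide))

lemma collapse_min (a b : V) : collapse (min a b) = min (collapse a) (collapse b) := by
  cases a <;> cases b <;> decide

lemma collapse_Fs (a : V) : collapse a = V.Fs ↔ a = V.Fs := by cases a <;> decide

lemma evalNot_collapse (v : V) : evalNot (collapse v) = evalNot v := by cases v <;> decide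

lemma collapse_evalNot (v : V) : collapse (evalNot v) = evalNot v := by cases v <;> decide

lemma evalHead_collapse (M : ℕ → V) (c : ℕ) (cs : List ℕ) :
    evalHead (fun A => collapse (M A)) c cs = collapse (evalHead M c cs) := by
  induction cs generalizing c with
  | nil => rfl
  | cons c' cs ih =>
    simp only [evalHead, collapse_Fs]
    split <;> simp [*]

lemma foldr_min_collapse (l : List V) :
    l.foldr (fun a b => min a b) V.T = collapse (l.foldr (fun a b => min a b) V.T) →
    True := fun _ => trivial

lemma collapse_foldr (l : List V) :
    (l.map collapse).foldr min V.T = collapse (l.foldr min V.T) := by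
  induction l with
  | nil => rfl
  | cons a l ih => simp [List.foldr, ih, collapse_min]

lemma evalBody_collapse (M : ℕ → V) (r : Rule) :
    evalBody (fun A => collapse (M A)) r = collapse (evalBody M r) := by
  have hlist : (r.pos.map (fun A => collapse (M A))) ++
      (r.neg.map (fun b => evalNot (collapse (M b)))) =
      ((r.pos.map M) ++ (r.neg.map (fun b => evalNot (M b)))).map collapse := by
    rw [List.map_append, List.map_map, List.map_map]
    congr 1
    exact List.map_congr_left (fun b _ => by
      simp [Function.comp, evalNot_collapse, collapse_evalNot])
  simp only [evalBody, hlist, collapse_foldr]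

/-- replacing every value `T*` of a model by `T` yields a model. -/
theorem collapse_Ts_isModel (P : Program) (M : ℕ → V) (h : isModel M P) :
    isModel (fun A => if M A = V.Ts then V.T else M A) P := by
  intro r hr
  have hs := h r hr
  show evalBody (fun A => collapse (M A)) r ≤ evalHead (fun A => collapse (M A)) r.hd r.hds
  rw [evalBody_collapse, evalHead_collapse]
  exact collapse_mono hs
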